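/- Let ε ∈ (0, 1/2), P_m > 0, and P_a, P_r be reals with 0 < P_a ≤ 2ε·P_m/(1 − ε²) and 0 ≤ P_r < P_a. For reals p_j and 0 ≤ P_min < P_max, define the outage λ = 0 if P_r ≥ P_max, λ = p_j·(P_max − P_r)/(P_max − P_min) if P_min ≤ P_r ≤ P_max, and λ = p_j if P_r ≤ P_min. Then for every (p_j, P_min, P_max) satisfying the covertness constraints p_j ≥ 1 − ε, P_max − P_min ≥ (p_j/ε)·P_a, (p_j/(1−ε) − 1)·P_max + P_min ≥ (p_j/(1−ε))·P_a, p_j ≤ 1, and the average jamming power constraint (p_j/2)·(P_min + P_max) ≤ P_m, one has λ ≥ 1 − ε; moreover, the choice p_j = 1 − ε, P_min = P_a, P_max = P_a/ε satisfies all these constraints and achieves λ = 1 − ε. -/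

import Mathlib

theorem min_outage_case_Pr_lt_Pa
    (ε Pm Pa Pr : ℝ)
    (hε0 : 0 < ε) (hε1 : ε < 1/2) (hPm : 0 < Pm)
    (hPa : 0 < Pa) (hPaPm : Pa ≤ 2 * ε * Pm / (1 - ε ^ 2))
    (hPr1 : 0 ≤ Pr) (hPr2 : Pr < Pa)
    (lam : ℝ → ℝ → ℝ → ℝ)
    (hlam : ∀ pj Pmin Pmax : ℝ, lam pj Pmin Pmax =
      if Pmax ≤ Pr then 0
      else if Pmin ≤ Pr then pj * (Pmax - Pr) / (Pmax - Pmin)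
      else pj) :
    (∀ pj Pmin Pmax : ℝ,
        1 - ε ≤ pj → pj ≤ 1 → 0 ≤ Pmin → Pmin < Pmax →
        pj / ε * Pa ≤ Pmax - Pmin →
        pj / (1 - ε) * Pa ≤ (pj / (1 - ε) - 1) * Pmax + Pmin →
        pj / 2 * (Pmin + Pmax) ≤ Pm →
        1 - ε ≤ lam pj Pmin Pmax) ∧
    (1 - ε ≤ (1 - ε) ∧ (1 - ε : ℝ) ≤ 1 ∧ 0 ≤ Pa ∧ Pa < Pa / ε ∧
      (1 - ε) / ε * Pa ≤ Pa / ε - Pa ∧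
      (1 - ε) / (1 - ε) * Pa ≤ ((1 - ε) / (1 - ε) - 1) * (Pa / ε) + Pa ∧
      (1 - ε) / 2 * (Pa + Pa / ε) ≤ Pm ∧
      lam (1 - ε) Pa (Pa / ε) = 1 - ε) := by
  have hε' : (0:ℝ) < 1 - ε := by linarith
  have hε1' : ε < 1 := by linarith
  constructor
  · intro pj Pmin Pmax h1 h2 h3 h4 h5 h6 h7
    have key : pj * Pa ≤ (pj - (1 - ε)) * Pmax + (1 - ε) * Pmin := by
      have h := mul_le_mul_of_nonneg_right h6 hε'.le
      have e : pj / (1 - ε) * (1 - ε) = pj := div_mul_cancel₀ _ (ne_of_gt hε')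
      nlinarith [h, e]
    have hpj0 : 0 < pj := by linarith
    rw [hlam]
    split_ifs with c1 c2
    · exfalso
      nlinarith [mul_lt_mul_of_pos_left (show Pmax < Pa by linarith) hpj0]
    · rw [le_div_iff₀ (by linarith : (0:ℝ) < Pmax - Pmin)]
      nlinarith [mul_le_mul_of_nonneg_left (le_of_lt hPr2) hpj0.le]
    · linarith
  · have hPadiv : Pa < Pa / ε := by
      rw [lt_div_iff₀ hε0]; nlinarith
    refine ⟨le_refl _, by linarith, hPa.le, hPadiv, ?_, ?_, ?_, ?_⟩
    · rw [div_mul_eq_mul_div, div_sub' (ne_of_gt hε0), div_le_div_iff₀ hε0 hε0]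
      ring_nf; nlinarith
    · rw [div_self (ne_of_gt hε')]; ring_nf; linarith
    · have h2 : Pa * (1 - ε ^ 2) ≤ 2 * ε * Pm := by
        rw [le_div_iff₀ (by nlinarith : (0:ℝ) < 1 - ε ^ 2)] at hPaPm
        exact hPaPm
      have hx : Pa / ε * ε = Pa := div_mul_cancel₀ _ (ne_of_gt hε0)
      nlinarith [h2, hx, mul_pos hε0 hPm]
    · rw [hlam]
      rw [if_neg (by linarith), if_neg (by linarith)]
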